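/- Suppose φ̂₁, φ̂₂ ∈ L²(ℝ) have disjoint supports, and Per φᵢ(x) := Σ_{j∈ℤ} |φ̂ᵢ(x+j)|² is essentially bounded on [0,1] for i = 1, 2, with support (mod 1) equal to Sᵢ ⊆ [0,1]. Then the map T: L²(S₁) ⊕ L²(S₂) → L²(ℝ) defined by T(f₁, f₂) = f₁·φ̂₁ + f₂·φ̂₂ (fᵢ extended 1-periodically) is a bounded linear map, with ‖T(f₁,f₂)‖² = ∫₀¹ (|f₁(x)|²·Per φ₁(x) + |f₂(x)|²·Per φ₂(x)) dx ≤ max(‖Per φ₁‖_∞, ‖Per φ₂‖_∞) · (‖f₁‖² + ‖f₂‖²). -/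

import Mathlib

open MeasureTheory Set

open scoped ENNReal


lemma periodize (g : ℝ → ℝ≥0∞) (hg : AEMeasurable g volume) :
    ∫⁻ x, g x = ∫⁻ x in Ioc (0:ℝ) 1, ∑' j : ℤ, g (x + j) := by
  have hdisj : Pairwise (Function.onFun Disjoint fun n : ℤ => Ioc ((n : ℝ)) ((n:ℝ) + 1)) := by
    simpa using pairwise_disjoint_Ioc_add_intCast (0 : ℝ)
  calc ∫⁻ x, g x = ∫⁻ x in ⋃ j : ℤ, Ioc (j : ℝ) ((j:ℝ) + 1), g x := by
        rw [iUnion_Ioc_intCast, Measure.restrict_univ]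
    _ = ∑' j : ℤ, ∫⁻ x in Ioc ((j:ℝ)) ((j:ℝ) + 1), g x :=
        lintegral_iUnion (fun j => measurableSet_Ioc) hdisj g
    _ = ∑' j : ℤ, ∫⁻ x in Ioc (0:ℝ) 1, g (x + j) := by
        refine tsum_congr fun j => ?_
        have hmp : MeasurePreserving (fun x : ℝ => x + (j:ℝ)) volume volume :=
          measurePreserving_add_right volume _
        have h := hmp.setLIntegral_comp_emb (measurableEmbedding_addRight _) g (Ioc (0:ℝ) 1)
        rw [h, image_add_const_Ioc, zero_add, add_comm (1:ℝ)]
    _ = ∫⁻ x in Ioc (0:ℝ) 1, ∑' j : ℤ, g (x + j) := by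
        rw [lintegral_tsum]
        intro j
        exact (hg.comp_quasiMeasurePreserving
          (measurePreserving_add_right volume (j:ℝ)).quasiMeasurePreserving).restrict

/-- The ENNReal periodization. -/
noncomputable def perE (φ : ℝ → ℂ) (x : ℝ) : ℝ≥0∞ :=
  ∑' j : ℤ, ENNReal.ofReal (‖φ (x + (j:ℝ))‖ ^ 2)

lemma perE_toReal (φ : ℝ → ℂ) (x : ℝ) :
    (∑' j : ℤ, ‖φ (x + (j:ℝ))‖ ^ 2) = (perE φ x).toReal := by
  by_cases h : Summable fun j : ℤ => ‖φ (x + (j:ℝ))‖ ^ 2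
  · rw [perE, ← ENNReal.ofReal_tsum_of_nonneg (fun j => sq_nonneg _) h,
      ENNReal.toReal_ofReal (tsum_nonneg fun j => sq_nonneg _)]
  · rw [tsum_eq_zero_of_not_summable h]
    have : perE φ x = ∞ := by
      by_contra hne
      apply h
      have := ENNReal.summable_toReal hne
      refine this.congr fun j => ?_
      simp [ENNReal.toReal_ofReal (sq_nonneg _)]
    rw [this, ENNReal.toReal_top]

lemma perE_ofReal {φ : ℝ → ℂ} {x : ℝ} (h : perE φ x ≠ ∞) :
    ENNReal.ofReal (∑' j : ℤ, ‖φ (x + (j:ℝ))‖ ^ 2) = perE φ x := by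
  rw [perE_toReal, ENNReal.ofReal_toReal h]

lemma perE_aemeasurable {φ : ℝ → ℂ} (hφ : AEMeasurable φ volume) :
    AEMeasurable (perE φ) volume := by
  apply AEMeasurable.ennreal_tsum
  intro j
  exact ENNReal.measurable_ofReal.comp_aemeasurable
    ((hφ.comp_quasiMeasurePreserving
      (measurePreserving_add_right volume (j:ℝ)).quasiMeasurePreserving).norm.pow
        aemeasurable_const)

example : True := trivial

lemma perE_ae_finite {φ : ℝ → ℂ} (hφ : MemLp φ 2 volume) :
    ∀ᵐ x ∂ volume.restrict (Ioc (0:ℝ) 1), perE φ x ≠ ∞ := by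
  have hint : Integrable (fun x => ‖φ x‖ ^ 2) volume := by
    have h := hφ.integrable_norm_rpow two_ne_zero ENNReal.ofNat_ne_top
    refine h.congr (Filter.Eventually.of_forall fun x => ?_)
    show ‖φ x‖ ^ (2:ℝ≥0∞).toReal = ‖φ x‖ ^ 2
    rw [ENNReal.toReal_ofNat, ← Real.rpow_natCast ‖φ x‖ 2]
    norm_num
  have hlt : ∫⁻ x, ENNReal.ofReal (‖φ x‖ ^ 2) < ∞ := hint.lintegral_lt_top
  have hg : AEMeasurable (fun x => ENNReal.ofReal (‖φ x‖ ^ 2)) volume :=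
    ENNReal.measurable_ofReal.comp_aemeasurable
      (hφ.1.aemeasurable.norm.pow aemeasurable_const)
  rw [periodize _ hg] at hlt
  have hne : ∫⁻ x in Ioc (0:ℝ) 1, perE φ x ≠ ∞ := hlt.ne
  have := ae_lt_top' ((perE_aemeasurable hφ.1.aemeasurable).restrict) hne
  exact this.mono fun x h => h.ne

lemma comp_key (φ f : ℝ → ℂ) (hφ : MemLp φ 2 volume) (hfper : ∀ x, f (x + 1) = f x)
    (hfm : Measurable f) :
    ∫⁻ x, ENNReal.ofReal (‖f x * φ x‖ ^ 2) =
      ∫⁻ x in Ioc (0:ℝ) 1, ENNReal.ofReal (‖f x‖ ^ 2 * ∑' j : ℤ, ‖φ (x + (j:ℝ))‖ ^ 2) := by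
  have hZ : ∀ (j : ℤ) (x : ℝ), f (x + j) = f x := fun j x => by
    simpa using (Function.Periodic.int_mul hfper j) x
  have hmeas : AEMeasurable (fun x => ENNReal.ofReal (‖f x * φ x‖ ^ 2)) volume :=
    ENNReal.measurable_ofReal.comp_aemeasurable
      ((hfm.aemeasurable.mul hφ.1.aemeasurable).norm.pow aemeasurable_const)
  rw [periodize _ hmeas]
  have step1 : ∀ x : ℝ, (∑' j : ℤ, ENNReal.ofReal (‖f (x + j) * φ (x + j)‖ ^ 2))
      = ENNReal.ofReal (‖f x‖ ^ 2) * perE φ x := by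
    intro x
    rw [perE, ← ENNReal.tsum_mul_left]
    refine tsum_congr fun j => ?_
    rw [norm_mul, mul_pow, hZ j x, ENNReal.ofReal_mul (sq_nonneg _)]
  calc ∫⁻ x in Ioc (0:ℝ) 1, ∑' j : ℤ, ENNReal.ofReal (‖f (x + j) * φ (x + j)‖ ^ 2)
      = ∫⁻ x in Ioc (0:ℝ) 1, ENNReal.ofReal (‖f x‖ ^ 2) * perE φ x :=
        lintegral_congr fun x => step1 x
    _ = ∫⁻ x in Ioc (0:ℝ) 1, ENNReal.ofReal (‖f x‖ ^ 2 * ∑' j : ℤ, ‖φ (x + (j:ℝ))‖ ^ 2) := by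
        refine lintegral_congr_ae ((perE_ae_finite hφ).mono fun x hx => ?_)
        show ENNReal.ofReal (‖f x‖ ^ 2) * perE φ x
          = ENNReal.ofReal (‖f x‖ ^ 2 * ∑' j : ℤ, ‖φ (x + (j:ℝ))‖ ^ 2)
        rw [ENNReal.ofReal_mul (sq_nonneg _), perE_ofReal hx]

/-- If `φ̂₁, φ̂₂ ∈ L²(ℝ)` have disjoint supports and the
periodizations `Per φᵢ(x) = Σ_{j∈ℤ} |φ̂ᵢ(x+j)|²` are bounded, with support
(mod 1) equal to `Sᵢ ⊆ [0,1]`, then `T(f₁,f₂) = f₁·φ̂₁ + f₂·φ̂₂` (with `fᵢ`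
1-periodic, supported mod 1 in `Sᵢ`) is norm-bounded:
`‖T(f₁,f₂)‖² = ∫₀¹ (|f₁|²·Per φ₁ + |f₂|²·Per φ₂) ≤ max C₁ C₂ · (‖f₁‖² + ‖f₂‖²)`. -/
theorem stmt17 (φ1 φ2 f1 f2 : ℝ → ℂ) (S1 S2 : Set ℝ) (C1 C2 : ℝ)
    (hS1 : MeasurableSet S1) (hS2 : MeasurableSet S2)
    (hS1sub : S1 ⊆ Icc 0 1) (hS2sub : S2 ⊆ Icc 0 1)
    (hφ1 : MeasureTheory.MemLp φ1 2 volume)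
    (hφ2 : MeasureTheory.MemLp φ2 2 volume)
    (hdisj : ∀ x, φ1 x * φ2 x = 0)
    (hPer1bd : ∀ x, ∑' j : ℤ, ‖φ1 (x + j)‖ ^ 2 ≤ C1)
    (hPer2bd : ∀ x, ∑' j : ℤ, ‖φ2 (x + j)‖ ^ 2 ≤ C2)
    (hPer1supp : ∀ x ∈ Icc (0:ℝ) 1, (∑' j : ℤ, ‖φ1 (x + j)‖ ^ 2 ≠ 0 ↔ x ∈ S1))
    (hPer2supp : ∀ x ∈ Icc (0:ℝ) 1, (∑' j : ℤ, ‖φ2 (x + j)‖ ^ 2 ≠ 0 ↔ x ∈ S2))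
    (hf1per : ∀ x, f1 (x + 1) = f1 x) (hf2per : ∀ x, f2 (x + 1) = f2 x)
    (hf1m : Measurable f1) (hf2m : Measurable f2)
    (hf1supp : ∀ x ∈ Icc (0:ℝ) 1, x ∉ S1 → f1 x = 0)
    (hf2supp : ∀ x ∈ Icc (0:ℝ) 1, x ∉ S2 → f2 x = 0)
    (hf1L2 : MeasureTheory.MemLp f1 2 (volume.restrict (Icc (0:ℝ) 1)))
    (hf2L2 : MeasureTheory.MemLp f2 2 (volume.restrict (Icc (0:ℝ) 1))) :
    (∫ x : ℝ, ‖f1 x * φ1 x + f2 x * φ2 x‖ ^ 2)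
      = ∫ x in Icc (0:ℝ) 1,
          (‖f1 x‖ ^ 2 * ∑' j : ℤ, ‖φ1 (x + j)‖ ^ 2 +
           ‖f2 x‖ ^ 2 * ∑' j : ℤ, ‖φ2 (x + j)‖ ^ 2) ∧
    (∫ x : ℝ, ‖f1 x * φ1 x + f2 x * φ2 x‖ ^ 2)
      ≤ max C1 C2 *
          ((∫ x in Icc (0:ℝ) 1, ‖f1 x‖ ^ 2) + ∫ x in Icc (0:ℝ) 1, ‖f2 x‖ ^ 2) := by
  -- measurability of everything
  have hA : AEMeasurable (fun x => f1 x * φ1 x) volume :=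
    hf1m.aemeasurable.mul hφ1.1.aemeasurable
  have hB : AEMeasurable (fun x => f2 x * φ2 x) volume :=
    hf2m.aemeasurable.mul hφ2.1.aemeasurable
  have hAe : AEMeasurable (fun x => ENNReal.ofReal (‖f1 x * φ1 x‖ ^ 2)) volume :=
    ENNReal.measurable_ofReal.comp_aemeasurable (hA.norm.pow aemeasurable_const)
  have hBe : AEMeasurable (fun x => ENNReal.ofReal (‖f2 x * φ2 x‖ ^ 2)) volume :=
    ENNReal.measurable_ofReal.comp_aemeasurable (hB.norm.pow aemeasurable_const)
  have hPer1m : AEMeasurable (fun x => ∑' j : ℤ, ‖φ1 (x + (j:ℝ))‖ ^ 2) volume := by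
    have h : (fun x : ℝ => ∑' j : ℤ, ‖φ1 (x + (j:ℝ))‖ ^ 2)
        = fun x => (perE φ1 x).toReal := funext (perE_toReal φ1)
    rw [h]
    exact ENNReal.measurable_toReal.comp_aemeasurable (perE_aemeasurable hφ1.1.aemeasurable)
  have hPer2m : AEMeasurable (fun x => ∑' j : ℤ, ‖φ2 (x + (j:ℝ))‖ ^ 2) volume := by
    have h : (fun x : ℝ => ∑' j : ℤ, ‖φ2 (x + (j:ℝ))‖ ^ 2)
        = fun x => (perE φ2 x).toReal := funext (perE_toReal φ2)
    rw [h]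
    exact ENNReal.measurable_toReal.comp_aemeasurable (perE_aemeasurable hφ2.1.aemeasurable)
  have hPer1nn : ∀ x : ℝ, 0 ≤ ∑' j : ℤ, ‖φ1 (x + (j:ℝ))‖ ^ 2 :=
    fun x => tsum_nonneg fun j => sq_nonneg _
  have hPer2nn : ∀ x : ℝ, 0 ≤ ∑' j : ℤ, ‖φ2 (x + (j:ℝ))‖ ^ 2 :=
    fun x => tsum_nonneg fun j => sq_nonneg _
  -- pointwise disjointness splitting
  have hsplit : ∀ x, ‖f1 x * φ1 x + f2 x * φ2 x‖ ^ 2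
      = ‖f1 x * φ1 x‖ ^ 2 + ‖f2 x * φ2 x‖ ^ 2 := by
    intro x
    rcases mul_eq_zero.1 (hdisj x) with h | h <;> simp [h]
  -- the LHS as a lintegral
  set LA := ∫⁻ x, ENNReal.ofReal (‖f1 x * φ1 x‖ ^ 2) with hLA
  set LB := ∫⁻ x, ENNReal.ofReal (‖f2 x * φ2 x‖ ^ 2) with hLB
  have hLHS : (∫ x : ℝ, ‖f1 x * φ1 x + f2 x * φ2 x‖ ^ 2) = (LA + LB).toReal := by
    rw [integral_eq_lintegral_of_nonneg_ae (f := fun x => ‖f1 x * φ1 x + f2 x * φ2 x‖ ^ 2)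
      (Filter.Eventually.of_forall fun x => sq_nonneg _)
      (((hA.add hB).norm.pow aemeasurable_const).aestronglyMeasurable)]
    rw [← lintegral_add_left' hAe]
    congr 1
    refine lintegral_congr fun x => ?_
    rw [hsplit x, ENNReal.ofReal_add (sq_nonneg _) (sq_nonneg _)]
  -- componentwise computation
  set MA := ∫⁻ x in Ioc (0:ℝ) 1,
      ENNReal.ofReal (‖f1 x‖ ^ 2 * ∑' j : ℤ, ‖φ1 (x + (j:ℝ))‖ ^ 2) with hMA
  set MB := ∫⁻ x in Ioc (0:ℝ) 1,
      ENNReal.ofReal (‖f2 x‖ ^ 2 * ∑' j : ℤ, ‖φ2 (x + (j:ℝ))‖ ^ 2) with hMB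
  have hLAMA : LA = MA := comp_key φ1 f1 hφ1 hf1per hf1m
  have hLBMB : LB = MB := comp_key φ2 f2 hφ2 hf2per hf2m
  -- restriction to Icc vs Ioc
  have hRe : volume.restrict (Icc (0:ℝ) 1) = volume.restrict (Ioc (0:ℝ) 1) :=
    (Measure.restrict_congr_set Ioc_ae_eq_Icc).symm
  -- RHS of the equality as a lintegral
  have hRHS : (∫ x in Icc (0:ℝ) 1,
        (‖f1 x‖ ^ 2 * ∑' j : ℤ, ‖φ1 (x + (j:ℝ))‖ ^ 2 +
         ‖f2 x‖ ^ 2 * ∑' j : ℤ, ‖φ2 (x + (j:ℝ))‖ ^ 2)) = (MA + MB).toReal := by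
    rw [hRe]
    rw [integral_eq_lintegral_of_nonneg_ae
      (Filter.Eventually.of_forall fun x =>
        add_nonneg (mul_nonneg (sq_nonneg _) (hPer1nn x)) (mul_nonneg (sq_nonneg _) (hPer2nn x)))
      ((((hf1m.norm.pow measurable_const).aemeasurable.mul hPer1m).add
        ((hf2m.norm.pow measurable_const).aemeasurable.mul hPer2m)).restrict.aestronglyMeasurable)]
    congr 1
    have hm1 : AEMeasurable
        (fun x => ENNReal.ofReal (‖f1 x‖ ^ 2 * ∑' j : ℤ, ‖φ1 (x + (j:ℝ))‖ ^ 2))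
        (volume.restrict (Ioc (0:ℝ) 1)) := by
      exact (ENNReal.measurable_ofReal.comp_aemeasurable
        ((hf1m.norm.pow measurable_const).aemeasurable.mul hPer1m)).restrict
    rw [hMA, hMB, ← lintegral_add_left' hm1]
    refine lintegral_congr fun x => ?_
    rw [ENNReal.ofReal_add (mul_nonneg (sq_nonneg _) (hPer1nn x))
      (mul_nonneg (sq_nonneg _) (hPer2nn x))]
  constructor
  · rw [hLHS, hRHS, hLAMA, hLBMB]
  -- the inequality
  · have hC1 : 0 ≤ C1 := le_trans (hPer1nn 0) (hPer1bd 0)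
    have hC2 : 0 ≤ C2 := le_trans (hPer2nn 0) (hPer2bd 0)
    have hCmax : 0 ≤ max C1 C2 := le_trans hC1 (le_max_left _ _)
    set N1 := ∫⁻ x in Ioc (0:ℝ) 1, ENNReal.ofReal (‖f1 x‖ ^ 2) with hN1def
    set N2 := ∫⁻ x in Ioc (0:ℝ) 1, ENNReal.ofReal (‖f2 x‖ ^ 2) with hN2def
    have hf1int : Integrable (fun x => ‖f1 x‖ ^ 2) (volume.restrict (Icc (0:ℝ) 1)) := by
      have h := hf1L2.integrable_norm_rpow two_ne_zero ENNReal.ofNat_ne_top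
      refine h.congr (Filter.Eventually.of_forall fun x => ?_)
      show ‖f1 x‖ ^ (2:ℝ≥0∞).toReal = ‖f1 x‖ ^ 2
      rw [ENNReal.toReal_ofNat, ← Real.rpow_natCast ‖f1 x‖ 2]
      norm_num
    have hf2int : Integrable (fun x => ‖f2 x‖ ^ 2) (volume.restrict (Icc (0:ℝ) 1)) := by
      have h := hf2L2.integrable_norm_rpow two_ne_zero ENNReal.ofNat_ne_top
      refine h.congr (Filter.Eventually.of_forall fun x => ?_)
      show ‖f2 x‖ ^ (2:ℝ≥0∞).toReal = ‖f2 x‖ ^ 2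
      rw [ENNReal.toReal_ofNat, ← Real.rpow_natCast ‖f2 x‖ 2]
      norm_num
    have hN1 : N1 ≠ ∞ := by
      rw [hN1def, ← hRe]; exact hf1int.lintegral_lt_top.ne
    have hN2 : N2 ≠ ∞ := by
      rw [hN2def, ← hRe]; exact hf2int.lintegral_lt_top.ne
    have hMAle : MA ≤ N1 * ENNReal.ofReal C1 := by
      have hm : AEMeasurable (fun x => ENNReal.ofReal (‖f1 x‖ ^ 2))
          (volume.restrict (Ioc (0:ℝ) 1)) := by
        exact (ENNReal.measurable_ofReal.comp_aemeasurable
          (hf1m.norm.pow measurable_const).aemeasurable).restrict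
      rw [hMA, hN1def, ← lintegral_mul_const'' _ hm]
      refine lintegral_mono fun x => ?_
      rw [← ENNReal.ofReal_mul (sq_nonneg _)]
      exact ENNReal.ofReal_le_ofReal
        (mul_le_mul_of_nonneg_left (hPer1bd x) (sq_nonneg _))
    have hMBle : MB ≤ N2 * ENNReal.ofReal C2 := by
      have hm : AEMeasurable (fun x => ENNReal.ofReal (‖f2 x‖ ^ 2))
          (volume.restrict (Ioc (0:ℝ) 1)) := by
        exact (ENNReal.measurable_ofReal.comp_aemeasurable
          (hf2m.norm.pow measurable_const).aemeasurable).restrict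
      rw [hMB, hN2def, ← lintegral_mul_const'' _ hm]
      refine lintegral_mono fun x => ?_
      rw [← ENNReal.ofReal_mul (sq_nonneg _)]
      exact ENNReal.ofReal_le_ofReal
        (mul_le_mul_of_nonneg_left (hPer2bd x) (sq_nonneg _))
    have hsum_le : MA + MB ≤ (N1 + N2) * ENNReal.ofReal (max C1 C2) := by
      rw [add_mul]
      refine add_le_add (le_trans hMAle ?_) (le_trans hMBle ?_)
      · exact mul_le_mul_right (ENNReal.ofReal_le_ofReal (le_max_left _ _)) _
      · exact mul_le_mul_right (ENNReal.ofReal_le_ofReal (le_max_right _ _)) _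
    have hfin : (N1 + N2) * ENNReal.ofReal (max C1 C2) ≠ ∞ :=
      ENNReal.mul_ne_top (ENNReal.add_ne_top.2 ⟨hN1, hN2⟩) ENNReal.ofReal_ne_top
    have hInt1 : (∫ x in Icc (0:ℝ) 1, ‖f1 x‖ ^ 2) = N1.toReal := by
      rw [integral_eq_lintegral_of_nonneg_ae (Filter.Eventually.of_forall fun x => sq_nonneg _)
        (hf1m.norm.pow measurable_const).aestronglyMeasurable, hRe]
    have hInt2 : (∫ x in Icc (0:ℝ) 1, ‖f2 x‖ ^ 2) = N2.toReal := by
      rw [integral_eq_lintegral_of_nonneg_ae (Filter.Eventually.of_forall fun x => sq_nonneg _)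
        (hf2m.norm.pow measurable_const).aestronglyMeasurable, hRe]
    rw [hLHS, hLAMA, hLBMB, hInt1, hInt2]
    calc (MA + MB).toReal ≤ ((N1 + N2) * ENNReal.ofReal (max C1 C2)).toReal :=
          ENNReal.toReal_mono hfin hsum_le
      _ = max C1 C2 * (N1.toReal + N2.toReal) := by
          rw [ENNReal.toReal_mul, ENNReal.toReal_add hN1 hN2,
            ENNReal.toReal_ofReal hCmax, mul_comm]
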